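/- (Corollary 2.7) IA-refinement is compositional with respect to IA-disjunction: for Interface Automata P, Q, R with common input and output alphabets and states p, q, r respectively, p ⊑_IA q implies p ∨ r ⊑_IA q ∨ r. -/

import Mathlib

/-- Transition labels: `none` is the silent action τ, `some a` a visible action. -/
abbrev Lbl (A : Type) : Type := Option A

/-- Weak internal transition: a (possibly empty) sequence of τ-steps. -/
def WeakEps {S A : Type} (tr : S → Lbl A → S → Prop) : S → S → Prop :=
  Relation.ReflTransGen (fun p q => tr p none q)

/-- Weak transition: τ-steps followed by one step labelled `α`. -/
def WeakTr {S A : Type} (tr : S → Lbl A → S → Prop) (p : S) (α : Lbl A) (p' : S) : Prop :=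
  ∃ p'', WeakEps tr p p'' ∧ tr p'' α p'

/-- State set of binary compositions: copies of both components plus combined states. -/
inductive CState (S T : Type) : Type
  | left : S → CState S T
  | right : T → CState S T
  | comb : S → T → CState S T

/-- `tr` is the transition relation of an Interface Automaton with inputs `I` and
outputs `O`: disjoint alphabets, labels within `I ∪ O`, and input-determinism. -/
def IsIA {S A : Type} (I O : Set A) (tr : S → Lbl A → S → Prop) : Prop :=
  Disjoint I O ∧
  (∀ s a s', tr s (some a) s' → a ∈ I ∪ O) ∧
  (∀ s a s' s'', a ∈ I → tr s (some a) s' → tr s (some a) s'' → s' = s'')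

/-- Alternating simulation relation between IAs with common alphabets `I`, `O`. -/
def IsAltSim {S T A : Type} (I O : Set A) (trP : S → Lbl A → S → Prop)
    (trQ : T → Lbl A → T → Prop) (R : S → T → Prop) : Prop :=
  ∀ p q, R p q →
    (∀ a q', a ∈ I → trQ q (some a) q' → ∃ p', trP p (some a) p' ∧ R p' q') ∧
    (∀ a p', a ∈ O → trP p (some a) p' → ∃ q', WeakTr trQ q (some a) q' ∧ R p' q') ∧
    (∀ p', trP p none p' → ∃ q', WeakEps trQ q q' ∧ R p' q')

/-- IA-refinement `p ⊑_IA q`. -/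
def IARef {S T A : Type} (I O : Set A) (trP : S → Lbl A → S → Prop)
    (trQ : T → Lbl A → T → Prop) (p : S) (q : T) : Prop :=
  ∃ R, IsAltSim I O trP trQ R ∧ R p q

/-- Transition relation of the IA-disjunction `P ∨ Q` (rules (I), (OT1), (OT2)),
on the states `{p ∨ q | p ∈ P, q ∈ Q} ∪ P ∪ Q`. -/
inductive DisjTr {S T A : Type} (I O : Set A) (trP : S → Lbl A → S → Prop)
    (trQ : T → Lbl A → T → Prop) : CState S T → Lbl A → CState S T → Prop
  | fromP {p α p'} : trP p α p' → DisjTr I O trP trQ (CState.left p) α (CState.left p')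
  | fromQ {q α q'} : trQ q α q' → DisjTr I O trP trQ (CState.right q) α (CState.right q')
  | inp {p q a p' q'} : a ∈ I → trP p (some a) p' → trQ q (some a) q' →
      DisjTr I O trP trQ (CState.comb p q) (some a) (CState.comb p' q')
  | ot1 {p q a p'} : a ∈ O → trP p (some a) p' →
      DisjTr I O trP trQ (CState.comb p q) (some a) (CState.left p')
  | ot1tau {p q p'} : trP p none p' →
      DisjTr I O trP trQ (CState.comb p q) none (CState.left p')
  | ot2 {p q a q'} : a ∈ O → trQ q (some a) q' →
      DisjTr I O trP trQ (CState.comb p q) (some a) (CState.right q')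
  | ot2tau {p q q'} : trQ q none q' →
      DisjTr I O trP trQ (CState.comb p q) none (CState.right q')

section Aux

variable {A S T U : Type} (I O : Set A)
variable (trP : S → Lbl A → S → Prop) (trQ : T → Lbl A → T → Prop)
variable (trR : U → Lbl A → U → Prop)

/-- Candidate alternating simulation relation on disjunction states. -/
inductive DRel (R : S → T → Prop) : CState S U → CState T U → Prop
  | ll {p q} : R p q → DRel R (CState.left p) (CState.left q)
  | rr {r} : DRel R (CState.right r) (CState.right r)
  | cc {p q r} : R p q → DRel R (CState.comb p r) (CState.comb q r)
  | lc {p q r} : R p q → DRel R (CState.left p) (CState.comb q r)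

lemma liftEpsL {q q' : T} (h : WeakEps trQ q q') :
    WeakEps (DisjTr I O trQ trR) (CState.left q) (CState.left q') :=
  Relation.ReflTransGen.lift (r := fun p q => trQ p none q)
    (p := fun p q => DisjTr I O trQ trR p none q) CState.left (fun _ _ h => DisjTr.fromP h) _ _ h

lemma combWeakOut {q q' : T} {a : A} (ha : a ∈ O) {r : U}
    (h : WeakTr trQ q (some a) q') :
    WeakTr (DisjTr I O trQ trR) (CState.comb q r) (some a) (CState.left q') := by
  obtain ⟨q'', heps, hstep⟩ := h
  rcases (Relation.ReflTransGen.cases_head heps) with rfl | ⟨q1, h1, hrest⟩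
  · exact ⟨_, Relation.ReflTransGen.refl, DisjTr.ot1 ha hstep⟩
  · exact ⟨CState.left q'',
      Relation.ReflTransGen.head (DisjTr.ot1tau h1) (liftEpsL I O trQ trR hrest),
      DisjTr.fromP hstep⟩

lemma combWeakEps {q q' : T} {r : U} (h : WeakEps trQ q q') :
    q = q' ∨ WeakEps (DisjTr I O trQ trR) (CState.comb q r) (CState.left q') := by
  rcases (Relation.ReflTransGen.cases_head h) with rfl | ⟨q1, h1, hrest⟩
  · exact Or.inl rfl
  · exact Or.inr (Relation.ReflTransGen.head (DisjTr.ot1tau h1) (liftEpsL I O trQ trR hrest))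

end Aux

/-- Corollary 2.7: IA-refinement is compositional w.r.t. IA-disjunction. -/
theorem ia_disj_compositional {A S T U : Type} (I O : Set A)
    (trP : S → Lbl A → S → Prop) (trQ : T → Lbl A → T → Prop)
    (trR : U → Lbl A → U → Prop)
    (hP : IsIA I O trP) (hQ : IsIA I O trQ) (hR : IsIA I O trR)
    (p : S) (q : T) (r : U)
    (h : IARef I O trP trQ p q) :
    IARef I O (DisjTr I O trP trR) (DisjTr I O trQ trR)
      (CState.comb p r) (CState.comb q r) := by
  obtain ⟨R, hsim, hpq⟩ := h
  refine ⟨DRel R, ?_, DRel.cc hpq⟩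
  have hIO : ∀ {a : A}, a ∈ I → a ∈ O → False :=
    fun ha ho => Set.disjoint_left.mp hP.1 ha ho
  have liftWTr : ∀ {q q' : T} {a : A}, WeakTr trQ q (some a) q' →
      WeakTr (DisjTr I O trQ trR) (CState.left q) (some a) (CState.left q') := by
    rintro q q' a ⟨q'', heps, hstep⟩
    exact ⟨CState.left q'', liftEpsL I O trQ trR heps, DisjTr.fromP hstep⟩
  intro s t hst
  cases hst with
  | ll hpq =>
    obtain ⟨hin, hout, htau⟩ := hsim _ _ hpq
    refine ⟨?_, ?_, ?_⟩
    · rintro a q' ha htr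
      cases htr with
      | fromP h =>
        obtain ⟨p', hp', hR'⟩ := hin a _ ha h
        exact ⟨_, DisjTr.fromP hp', DRel.ll hR'⟩
    · rintro a p' ha htr
      cases htr with
      | fromP h =>
        obtain ⟨q', hwq, hR'⟩ := hout a _ ha h
        exact ⟨_, liftWTr hwq, DRel.ll hR'⟩
    · rintro p' htr
      cases htr with
      | fromP h =>
        obtain ⟨q', hwq, hR'⟩ := htau _ h
        exact ⟨_, liftEpsL I O trQ trR hwq, DRel.ll hR'⟩
  | rr =>
    refine ⟨?_, ?_, ?_⟩
    · rintro a r' ha htr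
      cases htr with
      | fromQ h => exact ⟨_, DisjTr.fromQ h, DRel.rr⟩
    · rintro a r' ha htr
      cases htr with
      | fromQ h => exact ⟨_, ⟨_, Relation.ReflTransGen.refl, DisjTr.fromQ h⟩, DRel.rr⟩
    · rintro r' htr
      cases htr with
      | fromQ h => exact ⟨_, Relation.ReflTransGen.single (DisjTr.fromQ h), DRel.rr⟩
  | @cc p0 q0 r0 hpq =>
    obtain ⟨hin, hout, htau⟩ := hsim _ _ hpq
    refine ⟨?_, ?_, ?_⟩
    · rintro a s' ha htr
      cases htr with
      | inp hI hq hr =>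
        obtain ⟨p', hp', hR'⟩ := hin a _ ha hq
        exact ⟨_, DisjTr.inp hI hp' hr, DRel.cc hR'⟩
      | ot1 hO _ => exact absurd hO (fun hO => hIO ha hO)
      | ot2 hO _ => exact absurd hO (fun hO => hIO ha hO)
    · rintro a s' ha htr
      cases htr with
      | inp hI _ _ => exact absurd ha (fun ha => hIO hI ha)
      | ot1 hO hp =>
        obtain ⟨q', hwq, hR'⟩ := hout a _ ha hp
        exact ⟨_, combWeakOut I O trQ trR ha hwq, DRel.ll hR'⟩
      | ot2 hO hr =>
        exact ⟨_, ⟨_, Relation.ReflTransGen.refl, DisjTr.ot2 hO hr⟩, DRel.rr⟩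
    · rintro s' htr
      cases htr with
      | ot1tau hp =>
        obtain ⟨q', hwq, hR'⟩ := htau _ hp
        rcases combWeakEps I O trQ trR (r := r0) hwq with heq | heps
        · subst heq
          exact ⟨_, Relation.ReflTransGen.refl, DRel.lc hR'⟩
        · exact ⟨_, heps, DRel.ll hR'⟩
      | ot2tau hr =>
        exact ⟨_, Relation.ReflTransGen.single (DisjTr.ot2tau hr), DRel.rr⟩
  | @lc p0 q0 r0 hpq =>
    obtain ⟨hin, hout, htau⟩ := hsim _ _ hpq
    refine ⟨?_, ?_, ?_⟩
    · rintro a s' ha htr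
      cases htr with
      | inp hI hq hr =>
        obtain ⟨p', hp', hR'⟩ := hin a _ ha hq
        exact ⟨_, DisjTr.fromP hp', DRel.lc hR'⟩
      | ot1 hO _ => exact absurd hO (fun hO => hIO ha hO)
      | ot2 hO _ => exact absurd hO (fun hO => hIO ha hO)
    · rintro a p' ha htr
      cases htr with
      | fromP hp =>
        obtain ⟨q', hwq, hR'⟩ := hout a _ ha hp
        exact ⟨_, combWeakOut I O trQ trR ha hwq, DRel.ll hR'⟩
    · rintro p' htr
      cases htr with
      | fromP hp =>
        obtain ⟨q', hwq, hR'⟩ := htau _ hp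
        rcases combWeakEps I O trQ trR (r := r0) hwq with heq | heps
        · subst heq
          exact ⟨_, Relation.ReflTransGen.refl, DRel.lc hR'⟩
        · exact ⟨_, heps, DRel.ll hR'⟩
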